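/- Let k ≥ 1, p ≥ 1, let φ ∈ ℝ^k satisfy φ_j > 0 for all j, let Σ be diagonal with Σ_jj > 0, and let A be diagonal with A_jj > 0. Define W_eq(w; φ, Σ, A) = ½ − ½·g_{σ(w)}(wᵀφ)²·Σ_j w_j²/A_jj, where σ(w)² = 2·Σ_j Σ_jj w_j², and W*(φ, Σ, A) = sup over D = {w ∈ ℝ^k : w_j ≥ 0 for all j, ‖w‖_p = 1} of W_eq(w; φ, Σ, A). Fix a coordinate j and let A[j := t] denote A with its j-th diagonal entry replaced by t > 0. Then W*(φ, Σ, A[j := t]) tends to ½ (the maximum possible producer welfare) as t → ∞. -/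
import Mathlib

/-- The density of the centered Gaussian `N(0, σ²)`. -/
noncomputable def gauss (σ x : ℝ) : ℝ :=
  (Real.sqrt (2 * Real.pi * σ ^ 2))⁻¹ * Real.exp (-x ^ 2 / (2 * σ ^ 2))

/-- As the strategy-robustness `Aⱼⱼ` of behavior `j` tends to infinity, the
optimal producer welfare tends to `½`, the maximum possible value. -/
theorem stmt_14 (k : ℕ) (hk : 1 ≤ k) (p : ℝ) (hp : 1 ≤ p)
    (φ S A : Fin k → ℝ) (hφ : ∀ j, 0 < φ j) (hS : ∀ j, 0 < S j) (hA : ∀ j, 0 < A j)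
    (j : Fin k) :
    let pnorm : (Fin k → ℝ) → ℝ := fun w => (∑ i, |w i| ^ p) ^ (1 / p)
    let D : Set (Fin k → ℝ) := {w | (∀ i, 0 ≤ w i) ∧ pnorm w = 1}
    let Weq : (Fin k → ℝ) → (Fin k → ℝ) → ℝ := fun w C =>
      1 / 2 - (1 / 2) * (gauss (Real.sqrt (2 * ∑ i, S i * w i ^ 2)) (∑ i, w i * φ i) ^ 2
        * ∑ i, w i ^ 2 / C i)
    let Wstar : (Fin k → ℝ) → ℝ := fun C => sSup ((fun w => Weq w C) '' D)
    Filter.Tendsto (fun t : ℝ => Wstar (Function.update A j t))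
      Filter.atTop (nhds (1 / 2)) := by
  intro pnorm D Weq Wstar
  have hp0 : p ≠ 0 := by linarith
  -- the basis vector e_j
  set ej : Fin k → ℝ := fun i => if i = j then 1 else 0 with hej
  have hejD : ej ∈ D := by
    constructor
    · intro i; by_cases h : i = j <;> simp [hej, h]
    · show (∑ i, |ej i| ^ p) ^ (1 / p) = 1
      have h1 : ∀ i, |ej i| ^ p = if i = j then (1:ℝ) else 0 := by
        intro i; by_cases h : i = j <;> simp [hej, h, Real.zero_rpow hp0]
      rw [Finset.sum_congr rfl fun i _ => h1 i]
      simp [Real.one_rpow]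
  have hsum1 : ∑ i, S i * ej i ^ 2 = S j := by
    have : ∀ i, S i * ej i ^ 2 = if i = j then S i else 0 := by
      intro i; by_cases h : i = j <;> simp [hej, h]
    rw [Finset.sum_congr rfl fun i _ => this i, Finset.sum_ite_eq' _ j fun i => S i]
    simp
  have hsum2 : ∑ i, ej i * φ i = φ j := by
    have : ∀ i, ej i * φ i = if i = j then φ i else 0 := by
      intro i; by_cases h : i = j <;> simp [hej, h]
    rw [Finset.sum_congr rfl fun i _ => this i, Finset.sum_ite_eq' _ j fun i => φ i]
    simp
  have hsum3 : ∀ C : Fin k → ℝ, ∑ i, ej i ^ 2 / C i = 1 / C j := by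
    intro C
    have : ∀ i, ej i ^ 2 / C i = if i = j then 1 / C i else 0 := by
      intro i; by_cases h : i = j <;> simp [hej, h]
    rw [Finset.sum_congr rfl fun i _ => this i, Finset.sum_ite_eq' _ j fun i => 1 / C i]
    simp
  -- the value at e_j
  set g : ℝ := gauss (Real.sqrt (2 * S j)) (φ j) with hg
  have hWeq_ej : ∀ t : ℝ, Weq ej (Function.update A j t)
      = 1 / 2 - (1 / 2) * (g ^ 2 * (1 / t)) := by
    intro t
    show (1:ℝ) / 2 - (1 / 2) * (gauss (Real.sqrt (2 * ∑ i, S i * ej i ^ 2))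
        (∑ i, ej i * φ i) ^ 2 * ∑ i, ej i ^ 2 / Function.update A j t i)
      = 1 / 2 - (1 / 2) * (g ^ 2 * (1 / t))
    rw [hsum1, hsum2, hsum3, Function.update_self]
  -- upper and lower bounds for t > 0
  have hbound : ∀ t : ℝ, 0 < t → ∀ x ∈ (fun w => Weq w (Function.update A j t)) '' D,
      x ≤ 1 / 2 := by
    intro t ht x hx
    obtain ⟨w, hwD, rfl⟩ := hx
    have hC : ∀ i, 0 < Function.update A j t i := by
      intro i; by_cases h : i = j
      · subst h; rwa [Function.update_self]
      · rw [Function.update_of_ne h]; exact hA i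
    have hsum : 0 ≤ ∑ i, w i ^ 2 / Function.update A j t i :=
      Finset.sum_nonneg fun i _ => div_nonneg (sq_nonneg _) (hC i).le
    have : 0 ≤ (1 / 2 : ℝ) * (gauss (Real.sqrt (2 * ∑ i, S i * w i ^ 2))
        (∑ i, w i * φ i) ^ 2 * ∑ i, w i ^ 2 / Function.update A j t i) := by
      positivity
    show (1:ℝ) / 2 - _ ≤ 1 / 2
    linarith
  have hne : ∀ t : ℝ, ((fun w => Weq w (Function.update A j t)) '' D).Nonempty :=
    fun t => ⟨_, Set.mem_image_of_mem _ hejD⟩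
  have hlow : ∀ t : ℝ, 0 < t →
      1 / 2 - (1 / 2) * (g ^ 2 * (1 / t)) ≤ Wstar (Function.update A j t) := by
    intro t ht
    rw [← hWeq_ej t]
    exact le_csSup ⟨1 / 2, fun x hx => hbound t ht x hx⟩ (Set.mem_image_of_mem _ hejD)
  have hhigh : ∀ t : ℝ, 0 < t → Wstar (Function.update A j t) ≤ 1 / 2 :=
    fun t ht => csSup_le (hne t) (hbound t ht)
  have hf : Filter.Tendsto (fun t : ℝ => 1 / 2 - (1 / 2) * (g ^ 2 * (1 / t)))
      Filter.atTop (nhds (1 / 2)) := by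
    have h0 : Filter.Tendsto (fun t : ℝ => 1 / t) Filter.atTop (nhds 0) := by
      simpa using tendsto_inv_atTop_zero
    have h1 := (h0.const_mul (g ^ 2)).const_mul (1 / 2 : ℝ)
    have h2 := h1.const_sub (1 / 2 : ℝ)
    simpa [mul_assoc] using h2
  refine tendsto_of_tendsto_of_tendsto_of_le_of_le' hf tendsto_const_nhds ?_ ?_
  · filter_upwards [Filter.eventually_gt_atTop 0] with t ht using hlow t ht
  · filter_upwards [Filter.eventually_gt_atTop 0] with t ht using hhigh t ht
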